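/- The two-point boundary value problem (MFG TPBV) has a solution (X̄, s) on [0, T] if and only if Z_2 lies in the column space (range) of Z_1. -/

import Mathlib

open Matrix

/-- `M = B R⁻¹ Bᵀ`. -/
noncomputable def Mmat (n n1 : ℕ) (B : Matrix (Fin n) (Fin n1) ℝ)
    (R : Matrix (Fin n1) (Fin n1) ℝ) : Matrix (Fin n) (Fin n) ℝ :=
  B * R⁻¹ * Bᵀ

/-- The `2n × 2n` coefficient matrix `𝔸(t)` of the TPBV problem, where `L1 = Λ₁(t)`. -/
noncomputable def bbA (n n1 : ℕ) (A G Q Γ : Matrix (Fin n) (Fin n) ℝ)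
    (B : Matrix (Fin n) (Fin n1) ℝ) (R : Matrix (Fin n1) (Fin n1) ℝ)
    (L1 : Matrix (Fin n) (Fin n) ℝ) :
    Matrix (Fin n ⊕ Fin n) (Fin n ⊕ Fin n) ℝ :=
  Matrix.fromBlocks (A - Mmat n n1 B R * L1 + G) (-(Mmat n n1 B R))
    (Q * Γ - L1 * G) (-Aᵀ + L1 * Mmat n n1 B R)

/-- `Λ₁` solves the symmetric Riccati TVP on `[0,T]`. -/
def IsLam1Sol (n n1 : ℕ) (A Q Qf : Matrix (Fin n) (Fin n) ℝ)
    (B : Matrix (Fin n) (Fin n1) ℝ) (R : Matrix (Fin n1) (Fin n1) ℝ) (T : ℝ)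
    (Λ1 : ℝ → Matrix (Fin n) (Fin n) ℝ) : Prop :=
  (∀ t ∈ Set.Icc (0:ℝ) T, ∀ r c,
    HasDerivWithinAt (fun s => Λ1 s r c)
      ((Λ1 t * Mmat n n1 B R * Λ1 t - (Λ1 t * A + Aᵀ * Λ1 t) - Q) r c)
      (Set.Icc (0:ℝ) T) t)
  ∧ Λ1 T = Qf

/-- `Φ(t,τ)` is the fundamental solution matrix of `∂Φ/∂t = 𝔸(t) Φ`, `Φ(τ,τ) = I`,
for `t, τ ∈ [0,T]`. -/
def IsFundSol (n n1 : ℕ) (A G Q Γ : Matrix (Fin n) (Fin n) ℝ)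
    (B : Matrix (Fin n) (Fin n1) ℝ) (R : Matrix (Fin n1) (Fin n1) ℝ) (T : ℝ)
    (Λ1 : ℝ → Matrix (Fin n) (Fin n) ℝ)
    (Φ : ℝ → ℝ → Matrix (Fin n ⊕ Fin n) (Fin n ⊕ Fin n) ℝ) : Prop :=
  ∀ τ ∈ Set.Icc (0:ℝ) T, Φ τ τ = 1 ∧
    ∀ t ∈ Set.Icc (0:ℝ) T, ∀ p q,
      HasDerivWithinAt (fun s => Φ s τ p q)
        ((bbA n n1 A G Q Γ B R (Λ1 t) * Φ t τ) p q) (Set.Icc (0:ℝ) T) t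

/-- `Z₁ = Φ₂₂(T,0) + Q_f Γ_f Φ₁₂(T,0)`. -/
noncomputable def Z1mat (n : ℕ) (Qf Γf : Matrix (Fin n) (Fin n) ℝ) (T : ℝ)
    (Φ : ℝ → ℝ → Matrix (Fin n ⊕ Fin n) (Fin n ⊕ Fin n) ℝ) :
    Matrix (Fin n) (Fin n) ℝ :=
  (Φ T 0).toBlocks₂₂ + Qf * Γf * (Φ T 0).toBlocks₁₂

/-- `Z₂ = [Φ₂₁(T,0) + Q_f Γ_f Φ₁₁(T,0)] x₀ + Q_f η_f
      + ∫₀ᵀ [Φ₂₂(T,τ) + Q_f Γ_f Φ₁₂(T,τ)] Q η dτ`. -/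
noncomputable def Z2vec (n : ℕ) (Q Qf Γf : Matrix (Fin n) (Fin n) ℝ)
    (η ηf x0 : Fin n → ℝ) (T : ℝ)
    (Φ : ℝ → ℝ → Matrix (Fin n ⊕ Fin n) (Fin n ⊕ Fin n) ℝ)
    (j : Fin n) : ℝ :=
  (((Φ T 0).toBlocks₂₁ + Qf * Γf * (Φ T 0).toBlocks₁₁) *ᵥ x0) j
    + (Qf *ᵥ ηf) j
    + ∫ τ in (0:ℝ)..T,
        ((((Φ T τ).toBlocks₂₂ + Qf * Γf * (Φ T τ).toBlocks₁₂) *ᵥ (Q *ᵥ η)) j)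

/-- `(X̄, s)` solves the MFG TPBV problem on `[0,T]`. -/
def IsTPBVSol (n n1 : ℕ) (A G Q Qf Γ Γf : Matrix (Fin n) (Fin n) ℝ)
    (B : Matrix (Fin n) (Fin n1) ℝ) (R : Matrix (Fin n1) (Fin n1) ℝ)
    (η ηf x0 : Fin n → ℝ) (T : ℝ)
    (Λ1 : ℝ → Matrix (Fin n) (Fin n) ℝ) (X s : ℝ → Fin n → ℝ) : Prop :=
  (∀ t ∈ Set.Icc (0:ℝ) T, ∀ j,
    HasDerivWithinAt (fun u => X u j)
      (((A - Mmat n n1 B R * Λ1 t + G) *ᵥ X t - Mmat n n1 B R *ᵥ s t) j)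
      (Set.Icc (0:ℝ) T) t)
  ∧ (∀ t ∈ Set.Icc (0:ℝ) T, ∀ j,
    HasDerivWithinAt (fun u => s u j)
      ((-((Aᵀ - Λ1 t * Mmat n n1 B R) *ᵥ s t) - (Λ1 t * G) *ᵥ X t
        + Q *ᵥ (Γ *ᵥ X t + η)) j)
      (Set.Icc (0:ℝ) T) t)
  ∧ X 0 = x0
  ∧ s T = -(Qf *ᵥ (Γf *ᵥ X T + ηf))

open Matrix Set MeasureTheory
open scoped NNReal
set_option linter.unusedSectionVars false

namespace TPBVAux

variable {m : Type*} [Fintype m] [DecidableEq m]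

/-- Entrywise product rule for `t ↦ M(t) *ᵥ w(t)`. -/
lemma hasDerivWithinAt_mulVec
    (Mf : ℝ → Matrix m m ℝ) (Md : Matrix m m ℝ) (w : ℝ → m → ℝ) (wd : m → ℝ)
    {S : Set ℝ} {t : ℝ}
    (hM : ∀ p q, HasDerivWithinAt (fun s => Mf s p q) (Md p q) S t)
    (hw : ∀ q, HasDerivWithinAt (fun s => w s q) (wd q) S t) (p : m) :
    HasDerivWithinAt (fun s => (Mf s *ᵥ w s) p)
      ((Md *ᵥ w t + Mf t *ᵥ wd) p) S t := by
  simp only [Matrix.mulVec, dotProduct, Pi.add_apply]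
  rw [← Finset.sum_add_distrib]
  exact HasDerivWithinAt.fun_sum fun q _ => (hM p q).mul (hw q)

/-- An entrywise bound on a matrix gives a Lipschitz bound for `mulVec`. -/
lemma lipschitz_mulVec (c : ℝ) (hc : 0 ≤ c) (K : ℝ≥0)
    (hK : (K : ℝ) = c * Fintype.card m) (M : Matrix m m ℝ)
    (h : ∀ p q, |M p q| ≤ c) :
    LipschitzWith K (fun x : m → ℝ => M *ᵥ x) := by
  apply LipschitzWith.of_dist_le_mul
  intro x y
  rw [hK, dist_pi_le_iff (by positivity)]
  intro p
  rw [Real.dist_eq]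
  have h1 : (M *ᵥ x) p - (M *ᵥ y) p = ∑ q, M p q * (x q - y q) := by
    simp [Matrix.mulVec, dotProduct, mul_sub, Finset.sum_sub_distrib]
  rw [h1]
  calc |∑ q, M p q * (x q - y q)| ≤ ∑ q, |M p q * (x q - y q)| :=
        Finset.abs_sum_le_sum_abs _ _
    _ ≤ ∑ _q : m, c * dist x y := by
        apply Finset.sum_le_sum; intro q _
        rw [abs_mul]
        have h2 : |x q - y q| ≤ dist x y := by
          rw [← Real.dist_eq]; exact dist_le_pi_dist x y q
        exact mul_le_mul (h p q) h2 (abs_nonneg _) hc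
    _ = c * Fintype.card m * dist x y := by
        rw [Finset.sum_const, Finset.card_univ, nsmul_eq_mul]; ring

/-- Uniqueness for the linear inhomogeneous ODE on `[0, T]`, from any base point. -/
lemma ode_uniqueness {T : ℝ}
    (Ac : ℝ → Matrix m m ℝ) (K : ℝ≥0)
    (hlip : ∀ t, LipschitzWith K (fun x : m → ℝ => Ac t *ᵥ x))
    (cv : m → ℝ) (y z : ℝ → m → ℝ)
    (hy : ∀ t ∈ Icc (0:ℝ) T, HasDerivWithinAt y (Ac t *ᵥ y t + cv) (Icc (0:ℝ) T) t)
    (hz : ∀ t ∈ Icc (0:ℝ) T, HasDerivWithinAt z (Ac t *ᵥ z t + cv) (Icc (0:ℝ) T) t)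
    {t₀ : ℝ} (ht₀ : t₀ ∈ Icc (0:ℝ) T) (h0 : y t₀ = z t₀) :
    EqOn y z (Icc (0:ℝ) T) := by
  set v : ℝ → (m → ℝ) → (m → ℝ) := fun t x => Ac t *ᵥ x + cv with hvdef
  have hvlip : ∀ t, LipschitzWith K (v t) := by
    intro t
    apply LipschitzWith.of_dist_le_mul
    intro a b
    calc dist (v t a) (v t b) = dist (Ac t *ᵥ a) (Ac t *ᵥ b) := dist_add_right _ _ _
      _ ≤ K * dist a b := (hlip t).dist_le_mul a b
  have hycont : ContinuousOn y (Icc (0:ℝ) T) := fun u hu => (hy u hu).continuousWithinAt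
  have hzcont : ContinuousOn z (Icc (0:ℝ) T) := fun u hu => (hz u hu).continuousWithinAt
  intro t ht
  rcases le_total t t₀ with hle | hle
  · have heq : EqOn y z (Icc (0:ℝ) t₀) := by
      apply ODE_solution_unique_of_mem_Icc_left (v := v) (s := fun _ => univ)
        (fun u _ => (hvlip u).lipschitzOnWith)
        (hycont.mono (Icc_subset_Icc_right ht₀.2))
        (fun u hu => (hy u ⟨hu.1.le, hu.2.trans ht₀.2⟩).mono_of_mem_nhdsWithin
          (Icc_mem_nhdsLE_of_mem ⟨hu.1, hu.2.trans ht₀.2⟩))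
        (fun _ _ => mem_univ _)
        (hzcont.mono (Icc_subset_Icc_right ht₀.2))
        (fun u hu => (hz u ⟨hu.1.le, hu.2.trans ht₀.2⟩).mono_of_mem_nhdsWithin
          (Icc_mem_nhdsLE_of_mem ⟨hu.1, hu.2.trans ht₀.2⟩))
        (fun _ _ => mem_univ _) h0
    exact heq ⟨ht.1, hle⟩
  · have heq : EqOn y z (Icc t₀ T) := by
      apply ODE_solution_unique_of_mem_Icc_right (v := v) (s := fun _ => univ)
        (fun u _ => (hvlip u).lipschitzOnWith)
        (hycont.mono (Icc_subset_Icc_left ht₀.1))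
        (fun u hu => (hy u ⟨ht₀.1.trans hu.1, hu.2.le⟩).mono_of_mem_nhdsWithin
          (Icc_mem_nhdsGE_of_mem ⟨ht₀.1.trans hu.1, hu.2⟩))
        (fun _ _ => mem_univ _)
        (hzcont.mono (Icc_subset_Icc_left ht₀.1))
        (fun u hu => (hz u ⟨ht₀.1.trans hu.1, hu.2.le⟩).mono_of_mem_nhdsWithin
          (Icc_mem_nhdsGE_of_mem ⟨ht₀.1.trans hu.1, hu.2⟩))
        (fun _ _ => mem_univ _) h0
    exact heq ⟨hle, ht.2⟩

/-- Scalar fundamental theorem of calculus for continuous integrands. -/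
lemma hasDerivAt_integral_of_continuous {f : ℝ → ℝ} (hf : Continuous f) (a b : ℝ) :
    HasDerivAt (fun u => ∫ x in a..u, f x) (f b) b :=
  intervalIntegral.integral_hasDerivAt_right (hf.intervalIntegrable _ _)
    (hf.stronglyMeasurableAtFilter _ _) hf.continuousAt

/-- A constant matrix moves through a (componentwise) interval integral. -/
lemma integral_mulVec_comp {k : Type*} (M : Matrix k m ℝ) (f : ℝ → m → ℝ)
    (a b : ℝ) (hf : ∀ q, IntervalIntegrable (fun τ => f τ q) volume a b) (p : k) :
    ∫ τ in a..b, (M *ᵥ f τ) p = (M *ᵥ (fun q => ∫ τ in a..b, f τ q)) p := by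
  simp only [Matrix.mulVec, dotProduct]
  rw [intervalIntegral.integral_finset_sum (fun q _ => (hf q).const_mul (M p q))]
  simp [intervalIntegral.integral_const_mul]

/-- Componentwise continuity of `τ ↦ (F τ *ᵥ u) j`. -/
lemma continuous_mulVec_apply {k l : Type*} [Fintype l] (F : ℝ → Matrix k l ℝ)
    (hF : ∀ p q, Continuous fun τ => F τ p q) (u : l → ℝ) (j : k) :
    Continuous fun τ => (F τ *ᵥ u) j := by
  simp only [Matrix.mulVec, dotProduct]
  exact continuous_finset_sum _ fun q _ => (hF j q).mul continuous_const

end TPBVAux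

/-- The MFG TPBV problem has a solution on `[0,T]` if and only if
`Z₂` lies in the column space (range) of `Z₁`. -/
theorem tpbv_solvable_iff_Z2_in_range_Z1
    (n n1 : ℕ) (hn : 0 < n) (hn1 : 0 < n1) (T : ℝ) (hT : 0 < T)
    (A G Q Qf Γ Γf : Matrix (Fin n) (Fin n) ℝ)
    (B : Matrix (Fin n) (Fin n1) ℝ) (R : Matrix (Fin n1) (Fin n1) ℝ)
    (η ηf x0 : Fin n → ℝ)
    (hQ : Q.PosSemidef) (hQf : Qf.PosSemidef) (hR : R.PosDef)
    (Λ1 : ℝ → Matrix (Fin n) (Fin n) ℝ)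
    (hΛ1 : IsLam1Sol n n1 A Q Qf B R T Λ1)
    (Φ : ℝ → ℝ → Matrix (Fin n ⊕ Fin n) (Fin n ⊕ Fin n) ℝ)
    (hΦ : IsFundSol n n1 A G Q Γ B R T Λ1 Φ) :
    (∃ X s : ℝ → Fin n → ℝ, IsTPBVSol n n1 A G Q Qf Γ Γf B R η ηf x0 T Λ1 X s)
    ↔ (∃ w : Fin n → ℝ, Z1mat n Qf Γf T Φ *ᵥ w = Z2vec n Q Qf Γf η ηf x0 T Φ) := by
  classical
  obtain ⟨hΛder, hΛT⟩ := hΛ1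
  have h0T : (0:ℝ) ∈ Set.Icc (0:ℝ) T := ⟨le_rfl, hT.le⟩
  have hTT : T ∈ Set.Icc (0:ℝ) T := ⟨hT.le, le_rfl⟩
  -- clamping map
  set π : ℝ → ℝ := fun t => max 0 (min t T) with hπdef
  have hπmem : ∀ t, π t ∈ Set.Icc (0:ℝ) T := fun t =>
    ⟨le_max_left _ _, max_le hT.le (min_le_right _ _)⟩
  have hπid : ∀ t ∈ Set.Icc (0:ℝ) T, π t = t := fun t ht => by
    simp only [hπdef]; rw [min_eq_left ht.2, max_eq_right ht.1]
  have hπcont : Continuous π := continuous_const.max (continuous_id.min continuous_const)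
  -- the clamped coefficient matrix
  set Ab : ℝ → Matrix (Fin n ⊕ Fin n) (Fin n ⊕ Fin n) ℝ :=
    fun t => bbA n n1 A G Q Γ B R (Λ1 (π t)) with hAbdef
  have hAbeq : ∀ t ∈ Set.Icc (0:ℝ) T, Ab t = bbA n n1 A G Q Γ B R (Λ1 t) := fun t ht => by
    simp only [hAbdef, hπid t ht]
  have hAbidem : ∀ t, Ab t = Ab (π t) := fun t => by
    simp only [hAbdef, hπid (π t) (hπmem t)]
  have hΛc : Continuous fun t => Λ1 (π t) := by
    apply continuous_matrix
    intro i j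
    have h1 : ContinuousOn (fun u => Λ1 u i j) (Set.Icc 0 T) :=
      fun u hu => (hΛder u hu i j).continuousWithinAt
    exact h1.comp_continuous hπcont hπmem
  have hAbcont : Continuous Ab := by
    show Continuous fun t => Matrix.fromBlocks
      (A - Mmat n n1 B R * Λ1 (π t) + G) (-(Mmat n n1 B R))
      (Q * Γ - Λ1 (π t) * G) (-Aᵀ + Λ1 (π t) * Mmat n n1 B R)
    exact Continuous.matrix_fromBlocks
      ((continuous_const.sub (continuous_const.matrix_mul hΛc)).add continuous_const)
      continuous_const
      (continuous_const.sub (hΛc.matrix_mul continuous_const))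
      (continuous_const.add (hΛc.matrix_mul continuous_const))
  -- uniform entry bound and Lipschitz constant
  obtain ⟨C, hC⟩ := (isCompact_Icc (a := (0:ℝ)) (b := T)).exists_bound_of_continuousOn
    (f := fun t => ∑ p, ∑ q, |Ab t p q|)
    (Continuous.continuousOn (continuous_finset_sum _ fun p _ =>
      continuous_finset_sum _ fun q _ => (hAbcont.matrix_elem p q).abs))
  set c : ℝ := max C 0 with hcdef
  have hc0 : (0:ℝ) ≤ c := le_max_right _ _
  have hentry : ∀ t p q, |Ab t p q| ≤ c := by
    intro t p q
    rw [hAbidem t]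
    have h1 : |Ab (π t) p q| ≤ ∑ q', |Ab (π t) p q'| :=
      Finset.single_le_sum (f := fun q' => |Ab (π t) p q'|)
        (fun _ _ => abs_nonneg _) (Finset.mem_univ q)
    have h2 : ∑ q', |Ab (π t) p q'| ≤ ∑ p', ∑ q', |Ab (π t) p' q'| :=
      Finset.single_le_sum (f := fun p' => ∑ q', |Ab (π t) p' q'|)
        (fun _ _ => Finset.sum_nonneg fun _ _ => abs_nonneg _) (Finset.mem_univ p)
    have h3 := hC (π t) (hπmem t)
    rw [Real.norm_eq_abs] at h3
    have h4 := le_abs_self (∑ p', ∑ q', |Ab (π t) p' q'|)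
    exact le_trans h1 (le_trans h2 (le_trans h4 (le_trans h3 (le_max_left _ _))))
  set K : NNReal := ⟨c, hc0⟩ * (Fintype.card (Fin n ⊕ Fin n) : NNReal) with hKdef
  have hlip : ∀ t, LipschitzWith K fun x => Ab t *ᵥ x := fun t =>
    TPBVAux.lipschitz_mulVec c hc0 K (by rw [hKdef]; exact (NNReal.coe_mul (⟨c, hc0⟩ : NNReal) _).trans (congrArg₂ (· * ·) rfl (by simp))) (Ab t) (hentry t)
  have uniq := fun (cv : (Fin n ⊕ Fin n) → ℝ) => TPBVAux.ode_uniqueness (T := T) Ab K hlip cv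
  -- the inhomogeneous term
  set fv : (Fin n ⊕ Fin n) → ℝ := Sum.elim (0 : Fin n → ℝ) (Q *ᵥ η) with hfvdef
  -- facts about Φ
  have hΦ1 : ∀ τ ∈ Set.Icc (0:ℝ) T, Φ τ τ = 1 := fun τ hτ => (hΦ τ hτ).1
  have hΦd : ∀ τ ∈ Set.Icc (0:ℝ) T, ∀ t ∈ Set.Icc (0:ℝ) T, ∀ p q,
      HasDerivWithinAt (fun u => Φ u τ p q) ((Ab t * Φ t τ) p q) (Set.Icc 0 T) t := by
    intro τ hτ t ht p q
    rw [hAbeq t ht]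
    exact (hΦ τ hτ).2 t ht p q
  have hcol : ∀ τ ∈ Set.Icc (0:ℝ) T, ∀ (u : (Fin n ⊕ Fin n) → ℝ),
      ∀ t ∈ Set.Icc (0:ℝ) T,
      HasDerivWithinAt (fun s' => Φ s' τ *ᵥ u) (Ab t *ᵥ (Φ t τ *ᵥ u) + 0)
        (Set.Icc 0 T) t := by
    intro τ hτ u t ht
    rw [add_zero, Matrix.mulVec_mulVec]
    apply hasDerivWithinAt_pi.2
    intro p
    have h := TPBVAux.hasDerivWithinAt_mulVec (fun s' => Φ s' τ) (Ab t * Φ t τ)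
      (fun _ => u) 0 (hΦd τ hτ t ht) (fun q => hasDerivWithinAt_const _ _ _) p
    simpa using h
  have hunit : ∀ τ ∈ Set.Icc (0:ℝ) T, IsUnit (Φ τ 0).det := by
    intro τ hτ
    rw [← Matrix.isUnit_iff_isUnit_det, ← Matrix.mulVec_injective_iff_isUnit]
    intro v v' hvv
    have heq := uniq 0 (fun t => Φ t 0 *ᵥ v) (fun t => Φ t 0 *ᵥ v')
      (hcol 0 h0T v) (hcol 0 h0T v') hτ hvv h0T
    simpa [hΦ1 0 h0T, Matrix.one_mulVec] using heq
  -- inverse of the fundamental matrix, clamped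
  set Ψi : ℝ → Matrix (Fin n ⊕ Fin n) (Fin n ⊕ Fin n) ℝ := fun τ => (Φ (π τ) 0)⁻¹ with hΨidef
  have hΨccont : Continuous fun τ => Φ (π τ) 0 := by
    apply continuous_matrix
    intro p q
    have h1 : ContinuousOn (fun u => Φ u 0 p q) (Set.Icc 0 T) :=
      fun u hu => (hΦd 0 h0T u hu p q).continuousWithinAt
    exact h1.comp_continuous hπcont hπmem
  have hdet : ∀ τ, (Φ (π τ) 0).det ≠ 0 := fun τ => (hunit (π τ) (hπmem τ)).ne_zero
  have hΨicont : Continuous Ψi := by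
    have h1 : Ψi = fun τ => ((Φ (π τ) 0).det)⁻¹ • (Φ (π τ) 0).adjugate := by
      funext τ
      simp only [hΨidef]
      rw [Matrix.inv_def, Ring.inverse_eq_inv']
    rw [h1]
    exact ((hΨccont.matrix_det).inv₀ hdet).smul hΨccont.matrix_adjugate
  have hΨie : ∀ p q, Continuous fun τ => Ψi τ p q := fun p q => hΨicont.matrix_elem p q
  have hintc : ∀ q, Continuous fun τ => (Ψi τ *ᵥ fv) q := fun q =>
    TPBVAux.continuous_mulVec_apply Ψi hΨie fv q
  -- the particular-solution integral
  set g : ℝ → (Fin n ⊕ Fin n) → ℝ := fun t q => ∫ τ in (0:ℝ)..t, (Ψi τ *ᵥ fv) q with hgdef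
  have hg0 : g 0 = 0 := by
    funext q; simp only [hgdef]; simp
  have hgd : ∀ (b : ℝ) q, HasDerivAt (fun u => g u q) ((Ψi b *ᵥ fv) q) b := fun b q =>
    TPBVAux.hasDerivAt_integral_of_continuous (hintc q) 0 b
  -- the general solution
  set Y : ((Fin n ⊕ Fin n) → ℝ) → ℝ → (Fin n ⊕ Fin n) → ℝ :=
    fun y0 t => Φ t 0 *ᵥ (y0 + g t) with hYdef
  have hY0 : ∀ y0, Y y0 0 = y0 := by
    intro y0
    simp only [hYdef]
    rw [hg0, add_zero, hΦ1 0 h0T, Matrix.one_mulVec]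
  have hYd : ∀ (y0 : (Fin n ⊕ Fin n) → ℝ), ∀ t ∈ Set.Icc (0:ℝ) T,
      HasDerivWithinAt (Y y0) (Ab t *ᵥ Y y0 t + fv) (Set.Icc 0 T) t := by
    intro y0 t ht
    apply hasDerivWithinAt_pi.2
    intro p
    have hw : ∀ q, HasDerivWithinAt (fun u => (y0 + g u) q) ((Ψi t *ᵥ fv) q)
        (Set.Icc 0 T) t := by
      intro q
      have := ((hgd t q).hasDerivWithinAt (s := Set.Icc 0 T)).const_add (y0 q)
      simpa using this
    have hcomp := TPBVAux.hasDerivWithinAt_mulVec (fun u => Φ u 0) (Ab t * Φ t 0)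
      (fun u => y0 + g u) (Ψi t *ᵥ fv) (hΦd 0 h0T t ht) hw p
    have hval : ((Ab t * Φ t 0) *ᵥ (y0 + g t) + Φ t 0 *ᵥ (Ψi t *ᵥ fv)) p
        = (Ab t *ᵥ Y y0 t + fv) p := by
      have h1 : Φ t 0 *ᵥ (Ψi t *ᵥ fv) = fv := by
        simp only [hΨidef]
        rw [Matrix.mulVec_mulVec, hπid t ht, Matrix.mul_nonsing_inv _ (hunit t ht),
          Matrix.one_mulVec]
      rw [h1, ← Matrix.mulVec_mulVec]
    rw [← hval]
    exact hcomp
  -- uniqueness: every solution has this form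
  have formula : ∀ y : ℝ → (Fin n ⊕ Fin n) → ℝ,
      (∀ t ∈ Set.Icc (0:ℝ) T, HasDerivWithinAt y (Ab t *ᵥ y t + fv) (Set.Icc 0 T) t) →
      ∀ t ∈ Set.Icc (0:ℝ) T, y t = Y (y 0) t := by
    intro y hy t ht
    exact uniq fv y (Y (y 0)) hy (hYd (y 0)) h0T (hY0 (y 0)).symm ht
  -- cocycle property
  have hcoc : ∀ τ ∈ Set.Icc (0:ℝ) T, ∀ t ∈ Set.Icc (0:ℝ) T,
      Φ t τ = Φ t 0 * (Φ τ 0)⁻¹ := by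
    intro τ hτ t ht
    have hvec : ∀ u, Φ t τ *ᵥ u = Φ t 0 *ᵥ ((Φ τ 0)⁻¹ *ᵥ u) := by
      intro u
      have hz : ∀ t' ∈ Set.Icc (0:ℝ) T,
          HasDerivWithinAt (fun s' => Φ s' 0 *ᵥ ((Φ τ 0)⁻¹ *ᵥ u))
            (Ab t' *ᵥ (Φ t' 0 *ᵥ ((Φ τ 0)⁻¹ *ᵥ u)) + 0) (Set.Icc 0 T) t' :=
        fun t' ht' => hcol 0 h0T ((Φ τ 0)⁻¹ *ᵥ u) t' ht'
      have h0' : Φ τ τ *ᵥ u = Φ τ 0 *ᵥ ((Φ τ 0)⁻¹ *ᵥ u) := by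
        rw [hΦ1 τ hτ, Matrix.one_mulVec, Matrix.mulVec_mulVec,
          Matrix.mul_nonsing_inv _ (hunit τ hτ), Matrix.one_mulVec]
      exact uniq 0 (fun s' => Φ s' τ *ᵥ u) _ (hcol τ hτ u) hz hτ h0' ht
    ext p q
    have h2 := congrFun ((hvec (Pi.single q 1)).trans
      (Matrix.mulVec_mulVec _ _ _)) p
    simpa [Matrix.mulVec_single] using h2
  -- the continuous surrogate for τ ↦ Φ T τ
  set W : ℝ → Matrix (Fin n ⊕ Fin n) (Fin n ⊕ Fin n) ℝ := fun τ => Φ T 0 * Ψi τ with hWdef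
  have hWeq : ∀ τ ∈ Set.Icc (0:ℝ) T, W τ = Φ T τ := by
    intro τ hτ
    simp only [hWdef, hΨidef, hπid τ hτ]
    exact (hcoc τ hτ T hTT).symm
  have hWcont : Continuous W := continuous_const.matrix_mul hΨicont
  have hW12c : ∀ i, Continuous fun τ => ((W τ).toBlocks₁₂ *ᵥ (Q *ᵥ η)) i := fun i =>
    TPBVAux.continuous_mulVec_apply (fun τ => (W τ).toBlocks₁₂)
      (fun p q => hWcont.matrix_elem (Sum.inl p) (Sum.inr q)) _ i
  have hW22c : ∀ i, Continuous fun τ => ((W τ).toBlocks₂₂ *ᵥ (Q *ᵥ η)) i := fun i =>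
    TPBVAux.continuous_mulVec_apply (fun τ => (W τ).toBlocks₂₂)
      (fun p q => hWcont.matrix_elem (Sum.inr p) (Sum.inr q)) _ i
  have hQW12c : ∀ i, Continuous fun τ => ((Qf * Γf * (W τ).toBlocks₁₂) *ᵥ (Q *ᵥ η)) i := by
    intro i
    apply TPBVAux.continuous_mulVec_apply (fun τ => Qf * Γf * (W τ).toBlocks₁₂)
    intro p q
    simp only [Matrix.mul_apply]
    exact continuous_finset_sum _ fun k _ =>
      continuous_const.mul (hWcont.matrix_elem (Sum.inl k) (Sum.inr q))
  -- value of Y at time T, componentwise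
  have hYT : ∀ (y0 : (Fin n ⊕ Fin n) → ℝ) (p : Fin n ⊕ Fin n),
      Y y0 T p = (Φ T 0 *ᵥ y0) p + ∫ τ in (0:ℝ)..T, (W τ *ᵥ fv) p := by
    intro y0 p
    have h1 : Y y0 T = Φ T 0 *ᵥ y0 + Φ T 0 *ᵥ g T := by
      simp only [hYdef]
      rw [Matrix.mulVec_add]
    rw [h1, Pi.add_apply]
    congr 1
    have h2 := TPBVAux.integral_mulVec_comp (Φ T 0) (fun τ => Ψi τ *ᵥ fv) 0 T
      (fun q => (hintc q).intervalIntegrable 0 T) p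
    simp only [Matrix.mulVec_mulVec] at h2
    rw [← h2]
  -- block decompositions
  have hMfv : ∀ M' : Matrix (Fin n ⊕ Fin n) (Fin n ⊕ Fin n) ℝ,
      M' *ᵥ fv = Sum.elim (M'.toBlocks₁₂ *ᵥ (Q *ᵥ η)) (M'.toBlocks₂₂ *ᵥ (Q *ᵥ η)) := by
    intro M'
    conv_lhs => rw [← Matrix.fromBlocks_toBlocks M']
    simp only [hfvdef]
    rw [Matrix.fromBlocks_mulVec]
    simp
  have hMelim : ∀ (M' : Matrix (Fin n ⊕ Fin n) (Fin n ⊕ Fin n) ℝ) (a b : Fin n → ℝ),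
      M' *ᵥ Sum.elim a b = Sum.elim (M'.toBlocks₁₁ *ᵥ a + M'.toBlocks₁₂ *ᵥ b)
        (M'.toBlocks₂₁ *ᵥ a + M'.toBlocks₂₂ *ᵥ b) := by
    intro M' a b
    conv_lhs => rw [← Matrix.fromBlocks_toBlocks M']
    rw [Matrix.fromBlocks_mulVec]
    simp
  -- componentwise formulas at T
  have hXTc : ∀ (w' : Fin n → ℝ) (i : Fin n),
      Y (Sum.elim x0 w') T (Sum.inl i)
        = (((Φ T 0).toBlocks₁₁ *ᵥ x0 + (Φ T 0).toBlocks₁₂ *ᵥ w') i)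
          + ∫ τ in (0:ℝ)..T, ((W τ).toBlocks₁₂ *ᵥ (Q *ᵥ η)) i := by
    intro w' i
    rw [hYT, hMelim]
    simp only [Sum.elim_inl]
    congr 1
    have h3 : ∀ τ, (W τ *ᵥ fv) (Sum.inl i) = ((W τ).toBlocks₁₂ *ᵥ (Q *ᵥ η)) i := by
      intro τ; rw [hMfv]; simp
    simp only [h3]
  have hsTc : ∀ (w' : Fin n → ℝ) (i : Fin n),
      Y (Sum.elim x0 w') T (Sum.inr i)
        = (((Φ T 0).toBlocks₂₁ *ᵥ x0 + (Φ T 0).toBlocks₂₂ *ᵥ w') i)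
          + ∫ τ in (0:ℝ)..T, ((W τ).toBlocks₂₂ *ᵥ (Q *ᵥ η)) i := by
    intro w' i
    rw [hYT, hMelim]
    simp only [Sum.elim_inr]
    congr 1
    have h3 : ∀ τ, (W τ *ᵥ fv) (Sum.inr i) = ((W τ).toBlocks₂₂ *ᵥ (Q *ᵥ η)) i := by
      intro τ; rw [hMfv]; simp
    simp only [h3]
  -- splitting the Z₂ integral
  have hsplit : ∀ j : Fin n,
      (∫ τ in (0:ℝ)..T, (((Φ T τ).toBlocks₂₂ + Qf * Γf * (Φ T τ).toBlocks₁₂) *ᵥ (Q *ᵥ η)) j)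
      = (∫ τ in (0:ℝ)..T, ((W τ).toBlocks₂₂ *ᵥ (Q *ᵥ η)) j)
        + ∫ τ in (0:ℝ)..T, ((Qf * Γf * (W τ).toBlocks₁₂) *ᵥ (Q *ᵥ η)) j := by
    intro j
    have hcg2 : Set.EqOn
        (fun τ => (((Φ T τ).toBlocks₂₂ + Qf * Γf * (Φ T τ).toBlocks₁₂) *ᵥ (Q *ᵥ η)) j)
        (fun τ => ((W τ).toBlocks₂₂ *ᵥ (Q *ᵥ η)) j
          + ((Qf * Γf * (W τ).toBlocks₁₂) *ᵥ (Q *ᵥ η)) j)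
        (Set.uIcc 0 T) := by
      intro τ hτ
      rw [Set.uIcc_of_le hT.le] at hτ
      simp only [hWeq τ hτ, Matrix.add_mulVec, Pi.add_apply]
    rw [intervalIntegral.integral_congr hcg2]
    exact intervalIntegral.integral_add ((hW22c j).intervalIntegrable 0 T)
      ((hQW12c j).intervalIntegrable 0 T)
  -- moving Qf·Γf through the integral
  have hIb : ∀ j : Fin n,
      ((Qf * Γf) *ᵥ (fun i => ∫ τ in (0:ℝ)..T, ((W τ).toBlocks₁₂ *ᵥ (Q *ᵥ η)) i)) j
      = ∫ τ in (0:ℝ)..T, ((Qf * Γf * (W τ).toBlocks₁₂) *ᵥ (Q *ᵥ η)) j := by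
    intro j
    rw [← TPBVAux.integral_mulVec_comp (Qf * Γf)
      (fun τ => (W τ).toBlocks₁₂ *ᵥ (Q *ᵥ η)) 0 T
      (fun q => (hW12c q).intervalIntegrable 0 T) j]
    simp only [Matrix.mulVec_mulVec, ← Matrix.mul_assoc]
  -- the key identity
  have key : ∀ (w' : Fin n → ℝ) (j : Fin n),
      Y (Sum.elim x0 w') T (Sum.inr j)
        + (Qf *ᵥ (Γf *ᵥ (fun i => Y (Sum.elim x0 w') T (Sum.inl i)) + ηf)) j
      = (Z1mat n Qf Γf T Φ *ᵥ w') j + Z2vec n Q Qf Γf η ηf x0 T Φ j := by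
    intro w' j
    set Iv : Fin n → ℝ := fun i => ∫ τ in (0:ℝ)..T, ((W τ).toBlocks₁₂ *ᵥ (Q *ᵥ η)) i
      with hIvdef
    have hXTf : (fun i => Y (Sum.elim x0 w') T (Sum.inl i))
        = (Φ T 0).toBlocks₁₁ *ᵥ x0 + (Φ T 0).toBlocks₁₂ *ᵥ w' + Iv := by
      funext i
      rw [hXTc w' i]
      rfl
    rw [hsTc w' j, hXTf]
    have hQfterm : (Qf *ᵥ (Γf *ᵥ ((Φ T 0).toBlocks₁₁ *ᵥ x0
          + (Φ T 0).toBlocks₁₂ *ᵥ w' + Iv) + ηf)) j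
        = ((Qf * Γf * (Φ T 0).toBlocks₁₁) *ᵥ x0) j
          + ((Qf * Γf * (Φ T 0).toBlocks₁₂) *ᵥ w') j
          + ((Qf * Γf) *ᵥ Iv) j + (Qf *ᵥ ηf) j := by
      simp only [Matrix.mulVec_add, Matrix.mulVec_mulVec, Pi.add_apply, ← Matrix.mul_assoc]
    have hIb' : ((Qf * Γf) *ᵥ Iv) j
        = ∫ τ in (0:ℝ)..T, ((Qf * Γf * (W τ).toBlocks₁₂) *ᵥ (Q *ᵥ η)) j := hIb j
    rw [hQfterm, hIb']
    simp only [Z1mat, Z2vec]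
    rw [hsplit j]
    simp only [Matrix.add_mulVec, Pi.add_apply]
    ring

  -- component values of the vector field
  have helim : ∀ v : (Fin n ⊕ Fin n) → ℝ,
      Sum.elim (fun i => v (Sum.inl i)) (fun i => v (Sum.inr i)) = v := fun v =>
    funext fun p => by cases p <;> rfl
  have hvalL : ∀ (L : Matrix (Fin n) (Fin n) ℝ) (X' s' : Fin n → ℝ) (j : Fin n),
      (bbA n n1 A G Q Γ B R L *ᵥ Sum.elim X' s' + fv) (Sum.inl j)
        = ((A - Mmat n n1 B R * L + G) *ᵥ X' - Mmat n n1 B R *ᵥ s') j := by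
    intro L X' s' j
    simp only [bbA, hfvdef]
    rw [Matrix.fromBlocks_mulVec]
    simp [Matrix.neg_mulVec, sub_eq_add_neg]
  have hvalR : ∀ (L : Matrix (Fin n) (Fin n) ℝ) (X' s' : Fin n → ℝ) (j : Fin n),
      (bbA n n1 A G Q Γ B R L *ᵥ Sum.elim X' s' + fv) (Sum.inr j)
        = (-((Aᵀ - L * Mmat n n1 B R) *ᵥ s') - (L * G) *ᵥ X' + Q *ᵥ (Γ *ᵥ X' + η)) j := by
    intro L X' s' j
    simp only [bbA, hfvdef]
    rw [Matrix.fromBlocks_mulVec]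
    simp only [Sum.elim_comp_inl, Sum.elim_comp_inr, Sum.elim_inr, Sum.elim_inl,
      Matrix.sub_mulVec, Matrix.add_mulVec, Matrix.neg_mulVec, Matrix.mulVec_add,
      ← Matrix.mulVec_mulVec, Pi.add_apply, Pi.sub_apply, Pi.neg_apply]
    ring
  constructor
  · rintro ⟨X, s, hXd, hsd, hX0, hsT⟩
    have hyd : ∀ t ∈ Set.Icc (0:ℝ) T,
        HasDerivWithinAt (fun u => Sum.elim (X u) (s u))
          (Ab t *ᵥ Sum.elim (X t) (s t) + fv) (Set.Icc 0 T) t := by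
      intro t ht
      apply hasDerivWithinAt_pi.2
      rintro (j | j)
      · have h := hXd t ht j
        have hval := hvalL (Λ1 t) (X t) (s t) j
        rw [← hAbeq t ht] at hval
        rw [← hval] at h
        exact h
      · have h := hsd t ht j
        have hval := hvalR (Λ1 t) (X t) (s t) j
        rw [← hAbeq t ht] at hval
        rw [← hval] at h
        exact h
    have hfor := formula (fun u => Sum.elim (X u) (s u)) hyd T hTT
    have hy0 : Sum.elim (X 0) (s 0) = Sum.elim x0 (s 0) := by rw [hX0]
    rw [hy0] at hfor
    refine ⟨-(s 0), ?_⟩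
    funext j
    have hk := key (s 0) j
    rw [← hfor] at hk
    have h1 : (fun i => Sum.elim (X T) (s T) (Sum.inl i)) = X T := rfl
    have h2 : Sum.elim (X T) (s T) (Sum.inr j) = s T j := rfl
    rw [h1, h2, hsT] at hk
    simp only [Pi.neg_apply, neg_add_cancel] at hk
    rw [Matrix.mulVec_neg, Pi.neg_apply]
    linarith [hk]
  · rintro ⟨w, hw⟩
    refine ⟨fun t i => Y (Sum.elim x0 (-w)) t (Sum.inl i),
      fun t i => Y (Sum.elim x0 (-w)) t (Sum.inr i), ?_, ?_, ?_, ?_⟩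
    · intro t ht j
      have h := hasDerivWithinAt_pi.1 (hYd (Sum.elim x0 (-w)) t ht) (Sum.inl j)
      have hval := hvalL (Λ1 t) (fun i => Y (Sum.elim x0 (-w)) t (Sum.inl i))
        (fun i => Y (Sum.elim x0 (-w)) t (Sum.inr i)) j
      rw [helim, ← hAbeq t ht] at hval
      rw [hval] at h
      exact h
    · intro t ht j
      have h := hasDerivWithinAt_pi.1 (hYd (Sum.elim x0 (-w)) t ht) (Sum.inr j)
      have hval := hvalR (Λ1 t) (fun i => Y (Sum.elim x0 (-w)) t (Sum.inl i))
        (fun i => Y (Sum.elim x0 (-w)) t (Sum.inr i)) j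
      rw [helim, ← hAbeq t ht] at hval
      rw [hval] at h
      exact h
    · funext i
      show Y (Sum.elim x0 (-w)) 0 (Sum.inl i) = x0 i
      rw [hY0]
      rfl
    · funext j
      have hk := key (-w) j
      have hZ : (Z1mat n Qf Γf T Φ *ᵥ (-w)) j + Z2vec n Q Qf Γf η ηf x0 T Φ j = 0 := by
        rw [Matrix.mulVec_neg, Pi.neg_apply]
        linarith [congrFun hw j]
      have hk0 := hk.trans hZ
      show Y (Sum.elim x0 (-w)) T (Sum.inr j)
        = (-(Qf *ᵥ (Γf *ᵥ (fun i => Y (Sum.elim x0 (-w)) T (Sum.inl i)) + ηf))) j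
      rw [Pi.neg_apply]
      linarith [hk0]
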